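/- Let A be a ℂ-vector space with a countably infinite basis, and let μ, ν : A* → A be ℂ-linear maps from the full dual A* to A such that α(μ(β)) = β(ν(α)) for all α, β ∈ A*. Then the ranges of μ and ν are finite-dimensional and dim(range μ) = dim(range ν). -/

import Mathlib

open Cardinal Module

/-- Key auxiliary lemma: if `α (f β) = β (g α)` for all `α β`, then the rank of `g`
equals the rank of the dual of the range of `f`. -/
lemma aux_rank (A : Type*) [AddCommGroup A] [Module ℂ A]
    (f g : Module.Dual ℂ A →ₗ[ℂ] A)
    (h : ∀ α β : Module.Dual ℂ A, α (f β) = β (g α)) :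
    Module.rank ℂ (LinearMap.range g) =
      Module.rank ℂ (Module.Dual ℂ (LinearMap.range f)) := by
  have hι : Function.Injective (Module.Dual.eval ℂ A) :=
    Module.eval_apply_injective ℂ
  have hdm : f.dualMap = (Module.Dual.eval ℂ A).comp g := by
    ext α β
    simp [LinearMap.dualMap_apply, h]
  -- rank of range g = rank of range (eval ∘ g) = rank of range f.dualMap
  have e1 : Module.rank ℂ (LinearMap.range g) =
      Module.rank ℂ (LinearMap.range ((Module.Dual.eval ℂ A).comp g)) := by
    rw [LinearMap.range_comp]
    exact (Submodule.equivMapOfInjective _ hι (LinearMap.range g)).rank_eq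
  -- range f.dualMap = dualAnnihilator (ker f)
  have e2 : LinearMap.range f.dualMap = (LinearMap.ker f).dualAnnihilator :=
    LinearMap.range_dualMap_eq_dualAnnihilator_ker f
  -- Dual (range f) ≃ Dual (A* ⧸ ker f) ≃ dualAnnihilator (ker f)
  have e3 : Module.Dual ℂ (LinearMap.range f) ≃ₗ[ℂ]
      (LinearMap.ker f).dualAnnihilator :=
    (f.quotKerEquivRange.dualMap).trans
      (Submodule.dualQuotEquivDualAnnihilator (LinearMap.ker f))
  rw [e1, ← hdm, e2, e3.rank_eq]

/-- Let `A` be a `ℂ`-vector space with a countably infinite basis, and let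
`μ, ν : A* → A` be `ℂ`-linear maps from the full dual `A*` to `A` such that
`α(μ(β)) = β(ν(α))` for all `α, β ∈ A*`.  Then the ranges of `μ` and `ν` are
finite-dimensional, of the same dimension. -/
theorem stmt0 (A : Type*) [AddCommGroup A] [Module ℂ A] (b : Basis ℕ ℂ A)
    (μ ν : Module.Dual ℂ A →ₗ[ℂ] A)
    (h : ∀ α β : Module.Dual ℂ A, α (μ β) = β (ν α)) :
    FiniteDimensional ℂ (LinearMap.range μ) ∧
    FiniteDimensional ℂ (LinearMap.range ν) ∧
    Module.finrank ℂ (LinearMap.range μ) = Module.finrank ℂ (LinearMap.range ν) := by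
  have h' : ∀ α β : Module.Dual ℂ A, α (ν β) = β (μ α) := fun α β => (h β α).symm
  have : Module.Free ℂ ↥(LinearMap.range μ) := Module.Free.of_divisionRing ℂ _
  have : Module.Free ℂ ↥(LinearMap.range ν) := Module.Free.of_divisionRing ℂ _
  have e1 := aux_rank A μ ν h
  have e2 := aux_rank A ν μ h'
  -- If range μ were infinite-dimensional, we get a contradiction via Erdős–Kaplansky.
  have hμfin : Module.rank ℂ (LinearMap.range μ) < ℵ₀ := by
    by_contra hr
    push_neg at hr
    have h1 : Module.rank ℂ (LinearMap.range μ) <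
        Module.rank ℂ (LinearMap.range ν) := by
      rw [e1]
      simpa using lift_rank_lt_rank_dual (K := ℂ) hr
    have h2 : Module.rank ℂ (LinearMap.range ν) <
        Module.rank ℂ (LinearMap.range μ) := by
      rw [e2]
      simpa using lift_rank_lt_rank_dual (K := ℂ) (hr.trans h1.le)
    exact absurd (h1.trans h2) (lt_irrefl _)
  have hμ : FiniteDimensional ℂ (LinearMap.range μ) :=
    Module.rank_lt_aleph0_iff.mp hμfin
  -- Now the dual of range μ has the same rank as range μ
  have e4 : Module.rank ℂ (LinearMap.range ν) = Module.rank ℂ (LinearMap.range μ) := by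
    rw [e1, Module.dual_rank_eq]
    simp
  have hν : FiniteDimensional ℂ (LinearMap.range ν) :=
    Module.rank_lt_aleph0_iff.mp (e4 ▸ hμfin)
  refine ⟨hμ, hν, ?_⟩
  simp only [Module.finrank]
  rw [e4]
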